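/- Let G be a countable group, n ≥ 1 and m ∈ ℕ. For every ξ ∈ ℓ²(G,ℝ)^{⊕n}, the family indexed by pairs (l,g) ∈ {1,…,n}×G with terms D_m(ξ(l)(g)) is multipliable; i.e., the infinite product ∏_{l=1}^n ∏_{g∈G} D_m(ξ(l)(g)) converges unconditionally. -/

import Mathlib

open scoped ENNReal

noncomputable section

/-- The normalized Dirichlet kernel `D_m(t) = (2m+1)⁻¹ ∑_{j=-m}^{m} cos(2πjt)`. -/
def Dm (m : ℕ) (t : ℝ) : ℝ :=
  (2 * (m : ℝ) + 1)⁻¹ * ∑ j ∈ Finset.Icc (-(m : ℤ)) (m : ℤ), Real.cos (2 * Real.pi * (j : ℝ) * t)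

lemma cos_sub_one_abs (x : ℝ) : |Real.cos x - 1| ≤ x^2 / 2 := by
  rw [abs_sub_comm, abs_of_nonneg (by linarith [Real.cos_le_one x])]
  linarith [Real.one_sub_sq_div_two_le_cos (x := x)]

lemma Dm_continuous (m : ℕ) : Continuous (Dm m) := by
  unfold Dm; continuity

lemma Dm_zero (m : ℕ) : Dm m 0 = 1 := by
  have h2 : (0:ℝ) < 2 * m + 1 := by positivity
  unfold Dm
  simp [Int.card_Icc]
  rw [show ((m:ℤ) + 1 + m).toNat = 2*m+1 by omega]
  push_cast
  field_simp

lemma Dm_sub_one (m : ℕ) (t : ℝ) :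
    |Dm m t - 1|
      ≤ ((2 * (m : ℝ) + 1)⁻¹ * ∑ j ∈ Finset.Icc (-(m : ℤ)) (m : ℤ), (2 * Real.pi * (j : ℝ))^2 / 2) * t^2 := by
  have h2 : (0:ℝ) < 2 * m + 1 := by positivity
  have hcard : ((Finset.Icc (-(m : ℤ)) (m : ℤ)).card : ℝ) = 2 * m + 1 := by
    rw [Int.card_Icc, show ((m:ℤ) + 1 - (-(m:ℤ))).toNat = 2*m+1 by omega]
    push_cast; ring
  have key : Dm m t - 1
      = (2 * (m : ℝ) + 1)⁻¹ * ∑ j ∈ Finset.Icc (-(m : ℤ)) (m : ℤ), (Real.cos (2 * Real.pi * (j : ℝ) * t) - 1) := by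
    unfold Dm
    rw [Finset.sum_sub_distrib, Finset.sum_const, nsmul_eq_mul, mul_one, hcard]
    field_simp
    congr 1
    exact Finset.sum_congr rfl fun j _ => by ring_nf
  rw [key, abs_mul, abs_of_nonneg (by positivity : (0:ℝ) ≤ (2 * (m : ℝ) + 1)⁻¹), mul_assoc]
  refine mul_le_mul_of_nonneg_left ?_ (by positivity)
  rw [Finset.sum_mul]
  refine (Finset.abs_sum_le_sum_abs _ _).trans (Finset.sum_le_sum fun j _ => ?_)
  calc |Real.cos (2 * Real.pi * (j : ℝ) * t) - 1| ≤ (2 * Real.pi * (j : ℝ) * t)^2 / 2 :=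
        cos_sub_one_abs _
    _ = (2 * Real.pi * (j : ℝ))^2 / 2 * t^2 := by ring

lemma log_abs_le (x : ℝ) (hx : 1/2 < x) : |Real.log x| ≤ 2 * |x - 1| := by
  have hx0 : 0 < x := by linarith
  rcases le_or_gt 1 x with h | h
  · rw [abs_of_nonneg (Real.log_nonneg h), abs_of_nonneg (by linarith)]
    linarith [Real.log_le_sub_one_of_pos hx0]
  · rw [abs_of_nonpos (Real.log_nonpos hx0.le h.le), abs_of_neg (by linarith)]
    have h1 : Real.log x⁻¹ ≤ x⁻¹ - 1 := Real.log_le_sub_one_of_pos (by positivity)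
    rw [Real.log_inv] at h1
    have h2 : x⁻¹ ≤ 2 := by
      rw [inv_le_comm₀ hx0 (by norm_num)]
      linarith
    have h3 : x⁻¹ - 1 = (1 - x) * x⁻¹ := by field_simp
    nlinarith [sub_nonneg.2 h.le]

/-- For every `ξ ∈ ℓ²(G,ℝ)^{⊕n}` and `m ∈ ℕ`, the family `(l,g) ↦ D_m(ξ(l)(g))` is
multipliable; i.e. the infinite product `∏_{l=1}^n ∏_{g∈G} D_m(ξ(l)(g))` converges
unconditionally. -/
theorem dirichlet_multipliable {G : Type*} [Group G] [Countable G] {n : ℕ} (hn : 1 ≤ n)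
    (m : ℕ) (ξ : Fin n → lp (fun _ : G => ℝ) 2) :
    Multipliable (fun p : Fin n × G => Dm m (ξ p.1 p.2)) := by
  set K : ℝ := (2 * (m : ℝ) + 1)⁻¹ * ∑ j ∈ Finset.Icc (-(m:ℤ)) (m:ℤ), (2 * Real.pi * (j:ℝ))^2 / 2
    with hK
  have hK0 : 0 ≤ K := by
    apply mul_nonneg (by positivity)
    exact Finset.sum_nonneg fun j _ => by positivity
  -- summability of the squares
  have hsq : Summable (fun p : Fin n × G => (ξ p.1 p.2)^2) := by
    rw [summable_prod_of_nonneg (fun p => sq_nonneg _)]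
    refine ⟨fun l => ?_, Summable.of_finite⟩
    have h := (lp.memℓp (ξ l)).summable (by norm_num : 0 < (2:ℝ≥0∞).toReal)
    refine h.congr fun g => ?_
    rw [show ((2:ℝ≥0∞).toReal) = ((2:ℕ):ℝ) by norm_num, Real.rpow_natCast]
    simp [sq_abs]
  -- δ such that |t| < δ → 1/2 < Dm m t
  have hnh : ∀ᶠ t in nhds (0:ℝ), 1/2 < Dm m t := by
    have ht : Filter.Tendsto (Dm m) (nhds 0) (nhds 1) := by
      have := (Dm_continuous m).tendsto 0
      rwa [Dm_zero] at this
    exact ht.eventually (eventually_gt_nhds (by norm_num : (1:ℝ)/2 < 1))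
  obtain ⟨δ, hδ0, hδ⟩ : ∃ δ > 0, ∀ t : ℝ, |t| < δ → 1/2 < Dm m t := by
    rw [Metric.eventually_nhds_iff] at hnh
    obtain ⟨ε, hε, h⟩ := hnh
    exact ⟨ε, hε, fun t ht => h (by simpa [Real.dist_eq] using ht)⟩
  -- the bad set is finite
  set S : Set (Fin n × G) := {p | δ ≤ |ξ p.1 p.2|} with hS
  have hfin : S.Finite := by
    have h2 : ∀ᶠ p : Fin n × G in Filter.cofinite, (ξ p.1 p.2)^2 < δ^2 :=
      hsq.tendsto_cofinite_zero.eventually (eventually_lt_nhds (by positivity : (0:ℝ) < δ^2))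
    refine (Filter.eventually_cofinite.mp h2).subset fun p hp => ?_
    simp only [Set.mem_setOf_eq] at hp ⊢
    intro hlt
    have : δ^2 ≤ (ξ p.1 p.2)^2 := by
      calc δ^2 ≤ |ξ p.1 p.2|^2 := pow_le_pow_left₀ hδ0.le hp 2
        _ = (ξ p.1 p.2)^2 := sq_abs _
    linarith
  have hpos : ∀ p : ↥Sᶜ, 1/2 < Dm m (ξ (p : Fin n × G).1 (p : Fin n × G).2) := by
    intro p
    exact hδ _ (lt_of_not_ge p.2)
  -- multipliable on Sᶜ via logs
  have hlog : Summable fun p : ↥Sᶜ => Real.log (Dm m (ξ (p : Fin n × G).1 (p : Fin n × G).2)) := by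
    apply Summable.of_abs
    have hgsum : Summable (fun p : ↥Sᶜ => 2 * K * (ξ (p : Fin n × G).1 (p : Fin n × G).2)^2) :=
      (hsq.subtype Sᶜ).mul_left _
    refine Summable.of_nonneg_of_le (fun p => abs_nonneg _) (fun p => ?_) hgsum
    calc |Real.log (Dm m (ξ (p : Fin n × G).1 (p : Fin n × G).2))|
        ≤ 2 * |Dm m (ξ (p : Fin n × G).1 (p : Fin n × G).2) - 1| := log_abs_le _ (hpos p)
      _ ≤ 2 * (K * (ξ (p : Fin n × G).1 (p : Fin n × G).2)^2) := by
          have := Dm_sub_one m (ξ (p : Fin n × G).1 (p : Fin n × G).2)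
          rw [← hK] at this
          linarith
      _ = 2 * K * (ξ (p : Fin n × G).1 (p : Fin n × G).2)^2 := by ring
  have hcompl : Multipliable ((fun p : Fin n × G => Dm m (ξ p.1 p.2)) ∘ ((↑) : ↥Sᶜ → Fin n × G)) := by
    have := Real.multipliable_of_summable_log
      (f := fun (p : ↥Sᶜ) => Dm m (ξ (p : Fin n × G).1 (p : Fin n × G).2))
      (fun p => lt_trans (by norm_num) (hpos p)) hlog
    exact this
  have hSmul : Multipliable ((fun p : Fin n × G => Dm m (ξ p.1 p.2)) ∘ ((↑) : ↥S → Fin n × G)) := by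
    have := hfin.to_subtype
    exact Multipliable.of_finite
  exact hSmul.mul_compl hcompl
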